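/- arXiv:2108.04769 — 5 statements merged into one kernel-verified Lean document; each statement's English description precedes it below -/
import Mathlib

section
/- For an F-program P, the ID-stable operator S_P defined by S_P(I) = the least model of the ID-reduct P^{I,+} is antimonotone: I ⊆ J implies S_P(J) ⊆ S_P(I). -/
inductive Formula (α : Type) : Type 1
  | atom : α → Formula α
  | conj : {ι : Type} → (ι → Formula α) → Formula α
  | disj : {ι : Type} → (ι → Formula α) → Formula α
  | impl : Formula α → Formula α → Formula α

namespace Formula

def fbot {α : Type} : Formula α := .disj (fun i : Empty => i.elim)
def ftop {α : Type} : Formula α := .conj (fun i : Empty => i.elim)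

def Sat {α : Type} (I : Set α) : Formula α → Prop
  | .atom a => a ∈ I
  | .conj f => ∀ i, Sat I (f i)
  | .disj f => ∃ i, Sat I (f i)
  | .impl F G => Sat I F → Sat I G

open Classical in
noncomputable def reduct {α : Type} (I : Set α) : Bool → Formula α → Formula α
  | true, .atom a => .atom a
  | false, .atom a => if a ∈ I then ftop else fbot
  | pol, .conj f => .conj (fun i => reduct I pol (f i))
  | pol, .disj f => .disj (fun i => reduct I pol (f i))
  | true, .impl F G => .impl (reduct I false F) (reduct I true G)
  | false, .impl F G => .impl (reduct I true F) (reduct I false G)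

def atomsPol {α : Type} : Bool → Formula α → Set α
  | true, .atom a => {a}
  | false, .atom _ => ∅
  | pol, .conj f => ⋃ i, atomsPol pol (f i)
  | pol, .disj f => ⋃ i, atomsPol pol (f i)
  | pol, .impl F G => atomsPol (!pol) F ∪ atomsPol pol G

def Positive {α : Type} (F : Formula α) : Prop := atomsPol false F = ∅

open Classical in
noncomputable def freduct {α : Type} (X : Set α) : Formula α → Formula α
  | .atom a => if a ∈ X then .atom a else fbot
  | .conj f => if Sat X (.conj f) then .conj (fun i => freduct X (f i)) else fbot
  | .disj f => if Sat X (.disj f) then .disj (fun i => freduct X (f i)) else fbot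
  | .impl F G => if Sat X (.impl F G) then .impl (freduct X F) (freduct X G) else fbot

def noImpl {α : Type} : Formula α → Prop
  | .atom _ => True
  | .conj f => ∀ i, noImpl (f i)
  | .disj f => ∀ i, noImpl (f i)
  | .impl _ _ => False

def inR {α : Type} : Formula α → Prop
  | .atom _ => True
  | .conj f => ∀ i, inR (f i)
  | .disj f => ∀ i, inR (f i)
  | .impl F G => noImpl F ∧ inR G

end Formula

open Formula

structure Rule (α : Type) : Type 1 where
  head : α
  body : Formula α

abbrev Program (α : Type) := Set (Rule α)

def Tstep {α : Type} (P : Program α) (X : Set α) : Set α :=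
  {a | ∃ r ∈ P, r.head = a ∧ Sat X r.body}

noncomputable def progReduct {α : Type} (P : Program α) (I : Set α) : Program α :=
  (fun r => ⟨r.head, reduct I true r.body⟩) '' P

noncomputable def stableOp {α : Type} (P : Program α) (I : Set α) : Set α :=
  ⋂₀ {X | Tstep (progReduct P I) X ⊆ X}

def precLe {α : Type} (p q : Set α × Set α) : Prop := p.1 ⊆ q.1 ∧ q.2 ⊆ p.2

noncomputable def wfOp {α : Type} (P : Program α) (p : Set α × Set α) : Set α × Set α :=
  (stableOp P p.2, stableOp P p.1)

noncomputable def IsWFModel {α : Type} (P : Program α) (p : Set α × Set α) : Prop :=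
  wfOp P p = p ∧ ∀ q, wfOp P q = q → precLe p q

def IsModel {α : Type} (P : Program α) (X : Set α) : Prop :=
  ∀ r ∈ P, Sat X r.body → r.head ∈ X

noncomputable def freductProg {α : Type} (P : Program α) (X : Set α) : Program α :=
  (fun r => ⟨r.head, freduct X r.body⟩) '' P

noncomputable def StableModel {α : Type} (P : Program α) (X : Set α) : Prop :=
  IsModel (freductProg P X) X ∧ ∀ Y, IsModel (freductProg P X) Y → Y ⊆ X → Y = X

noncomputable def simpProg {α : Type} (P : Program α) (I J : Set α) : Program α :=
  {r | r ∈ P ∧ Sat J (reduct I true r.body)}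

noncomputable def relStable {α : Type} (P : Program α) (Ir J : Set α) : Set α :=
  ⋂₀ {X | Tstep (progReduct P J) (Ir ∪ X) ⊆ X}

noncomputable def relWF {α : Type} (P : Program α) (r p : Set α × Set α) : Set α × Set α :=
  (relStable P r.1 (p.2 ∪ r.2), relStable P r.2 (p.1 ∪ r.1))

lemma reduct_antimono {α : Type} (I J : Set α) (h : I ⊆ J) (X : Set α) :
    ∀ F : Formula α, (Sat X (reduct J true F) → Sat X (reduct I true F)) ∧
      (Sat X (reduct I false F) → Sat X (reduct J false F)) := by
  intro F
  induction F with
  | atom a =>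
    refine ⟨fun hs => hs, ?_⟩
    simp only [reduct]
    split_ifs with hI hJ
    · intro _; simp [Sat, ftop]
    · exact absurd (h hI) hJ
    · intro hs; exact absurd hs (by simp [Sat, fbot])
    · intro hs; exact absurd hs (by simp [Sat, fbot])
  | conj f ih =>
    exact ⟨fun hs i => (ih i).1 (hs i), fun hs i => (ih i).2 (hs i)⟩
  | disj f ih =>
    exact ⟨fun ⟨i, hs⟩ => ⟨i, (ih i).1 hs⟩, fun ⟨i, hs⟩ => ⟨i, (ih i).2 hs⟩⟩
  | impl F G ihF ihG =>
    exact ⟨fun hs hF => (ihG.1 (hs (ihF.2 hF))), fun hs hF => (ihG.2 (hs (ihF.1 hF)))⟩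


/-- The ID-stable operator of an F-program is antimonotone. -/
theorem stmt8 {α : Type} (P : Program α) (I J : Set α) (h : I ⊆ J) :
    stableOp P J ⊆ stableOp P I := by
  intro a ha
  intro X hX
  apply ha
  show Tstep (progReduct P J) X ⊆ X
  intro b hb
  apply hX
  obtain ⟨r', hr', hhd, hsat⟩ := hb
  obtain ⟨r, hrP, rfl⟩ := hr'
  exact ⟨⟨r.head, reduct I true r.body⟩, ⟨r, hrP, rfl⟩, hhd,
    (reduct_antimono I J h X r.body).1 hsat⟩
end

section
/- The ID-well-founded model of any F-program P is consistent: if (I,J) is the least fixed point of the ID-well-founded operator W_P(I,J) = (S_P(J), S_P(I)) with respect to the precision ordering, then I ⊆ J. -/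
open Formula

/-- The ID-well-founded model of an F-program is consistent: `I ⊆ J`. -/
theorem stmt10 {α : Type} (P : Program α) (I J : Set α)
    (h : IsWFModel P (I, J)) : I ⊆ J := by
  obtain ⟨hfix, hleast⟩ := h
  have h1 : stableOp P J = I := congrArg Prod.fst hfix
  have h2 : stableOp P I = J := congrArg Prod.snd hfix
  have hswap : wfOp P (J, I) = (J, I) := by
    simp [wfOp, h1, h2]
  exact (hleast (J, I) hswap).1
end

section
/- Let P be an R-program with well-founded model (I,J). Every stable model X of P satisfies I ⊆ X ⊆ J. -/
open Formula

namespace Formula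

-- basic
theorem not_sat_fbot {α : Type} (Y : Set α) : ¬ Sat Y (fbot (α := α)) := by
  rintro ⟨i, _⟩; exact i.elim

theorem sat_ftop {α : Type} (Y : Set α) : Sat Y (ftop (α := α)) := fun i => i.elim

theorem sat_mono_noImpl {α : Type} {F : Formula α} (h : noImpl F) {Y Z : Set α}
    (hYZ : Y ⊆ Z) : Sat Y F → Sat Z F := by
  induction F with
  | atom a => exact fun hs => hYZ hs
  | conj f ih => exact fun hs i => ih i (h i) (hs i)
  | disj f ih => rintro ⟨i, hi⟩; exact ⟨i, ih i (h i) hi⟩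
  | impl F G ihF ihG => exact h.elim

theorem sat_reduct_false_iff {α : Type} {F : Formula α} (h : noImpl F) (I Y : Set α) :
    Sat Y (reduct I false F) ↔ Sat I F := by
  induction F with
  | atom a =>
      simp only [reduct]
      by_cases ha : a ∈ I
      · rw [if_pos ha]
        exact ⟨fun _ => ha, fun _ => sat_ftop Y⟩
      · rw [if_neg ha]
        exact ⟨fun hs => absurd hs (not_sat_fbot Y), fun hs => absurd hs ha⟩
  | conj f ih =>
      simp only [reduct]
      exact forall_congr' fun i => ih i (h i)
  | disj f ih =>
      simp only [reduct]
      exact exists_congr fun i => ih i (h i)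
  | impl F G ihF ihG => exact h.elim

theorem sat_reduct_anti {α : Type} {F : Formula α} (h : inR F) {I₁ I₂ : Set α}
    (hI : I₁ ⊆ I₂) (Y : Set α) : Sat Y (reduct I₂ true F) → Sat Y (reduct I₁ true F) := by
  induction F with
  | atom a => exact fun hs => hs
  | conj f ih =>
      simp only [reduct]
      exact fun hs i => ih i (h i) (hs i)
  | disj f ih =>
      simp only [reduct]
      rintro ⟨i, hi⟩; exact ⟨i, ih i (h i) hi⟩
  | impl F G ihF ihG =>
      simp only [reduct]
      intro hs hA
      refine ihG h.2 ?_
      refine hs ?_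
      rw [sat_reduct_false_iff h.1]
      exact sat_mono_noImpl h.1 hI ((sat_reduct_false_iff h.1 I₁ Y).mp hA)

theorem sat_reduct_mono_world {α : Type} {F : Formula α} (h : inR F) {I Y₁ Y₂ : Set α}
    (hY : Y₁ ⊆ Y₂) : Sat Y₁ (reduct I true F) → Sat Y₂ (reduct I true F) := by
  induction F with
  | atom a => exact fun hs => hY hs
  | conj f ih =>
      simp only [reduct]
      exact fun hs i => ih i (h i) (hs i)
  | disj f ih =>
      simp only [reduct]
      rintro ⟨i, hi⟩; exact ⟨i, ih i (h i) hi⟩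
  | impl F G ihF ihG =>
      simp only [reduct]
      intro hs hA
      refine ihG h.2 (hs ?_)
      rw [sat_reduct_false_iff h.1]
      exact (sat_reduct_false_iff h.1 I Y₂).mp hA

theorem sat_of_sat_reduct {α : Type} {F : Formula α} (h : inR F) {X J : Set α}
    (hXJ : X ⊆ J) : Sat X (reduct J true F) → Sat X F := by
  induction F with
  | atom a => exact fun hs => hs
  | conj f ih => exact fun hs i => ih i (h i) (hs i)
  | disj f ih => rintro ⟨i, hi⟩; exact ⟨i, ih i (h i) hi⟩
  | impl F G ihF ihG =>
      intro hs hA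
      refine ihG h.2 (hs ?_)
      rw [sat_reduct_false_iff h.1]
      exact sat_mono_noImpl h.1 hXJ hA

theorem sat_of_sat_freduct {α : Type} {F : Formula α} {X Y : Set α} :
    Sat Y (freduct X F) → Sat X F := by
  induction F with
  | atom a =>
      simp only [freduct]
      by_cases ha : a ∈ X
      · rw [if_pos ha]; exact fun _ => ha
      · rw [if_neg ha]; exact fun hs => absurd hs (not_sat_fbot Y)
  | conj f ih =>
      simp only [freduct]
      by_cases hc : Sat X (conj f)
      · rw [if_pos hc]; exact fun _ => hc
      · rw [if_neg hc]; exact fun hs => absurd hs (not_sat_fbot Y)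
  | disj f ih =>
      simp only [freduct]
      by_cases hc : Sat X (disj f)
      · rw [if_pos hc]; exact fun _ => hc
      · rw [if_neg hc]; exact fun hs => absurd hs (not_sat_fbot Y)
  | impl F G ihF ihG =>
      simp only [freduct]
      by_cases hc : Sat X (impl F G)
      · rw [if_pos hc]; exact fun _ => hc
      · rw [if_neg hc]; exact fun hs => absurd hs (not_sat_fbot Y)

theorem sat_freduct_self {α : Type} {F : Formula α} {X : Set α} :
    Sat X F → Sat X (freduct X F) := by
  induction F with
  | atom a => intro hs; simp only [freduct]; rw [if_pos (show a ∈ X from hs)]; exact hs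
  | conj f ih =>
      intro hs; simp only [freduct]; rw [if_pos hs]
      exact fun i => ih i (hs i)
  | disj f ih =>
      intro hs; simp only [freduct]; rw [if_pos hs]
      obtain ⟨i, hi⟩ := hs; exact ⟨i, ih i hi⟩
  | impl F G ihF ihG =>
      intro hs; simp only [freduct]; rw [if_pos hs]
      exact fun hA => ihG (hs (sat_of_sat_freduct hA))

theorem sat_freduct_of_noImpl {α : Type} {A : Formula α} (h : noImpl A) {I Y X : Set α}
    (hIY : I ⊆ Y) (hIX : I ⊆ X) : Sat I A → Sat Y (freduct X A) := by
  induction A with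
  | atom a =>
      intro hs; simp only [freduct]; rw [if_pos (hIX (show a ∈ I from hs))]; exact hIY hs
  | conj f ih =>
      intro hs; simp only [freduct]
      rw [if_pos (sat_mono_noImpl h hIX hs)]
      exact fun i => ih i (h i) (hs i)
  | disj f ih =>
      intro hs; simp only [freduct]
      rw [if_pos (sat_mono_noImpl h hIX hs)]
      obtain ⟨i, hi⟩ := hs; exact ⟨i, ih i (h i) hi⟩
  | impl F G ihF ihG => exact h.elim

theorem sat_reduct_of_sat_freduct {α : Type} {F : Formula α} (h : inR F) {I X S : Set α}
    (hIX : I ⊆ X) (hIS : I ⊆ S) :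
    Sat (X ∩ S) (freduct X F) → Sat S (reduct I true F) := by
  induction F with
  | atom a =>
      simp only [freduct]
      by_cases ha : a ∈ X
      · rw [if_pos ha]; exact fun hs => hs.2
      · rw [if_neg ha]; exact fun hs => absurd hs (not_sat_fbot _)
  | conj f ih =>
      simp only [freduct, reduct]
      by_cases hc : Sat X (conj f)
      · rw [if_pos hc]; exact fun hs i => ih i (h i) (hs i)
      · rw [if_neg hc]; exact fun hs => absurd hs (not_sat_fbot _)
  | disj f ih =>
      simp only [freduct, reduct]
      by_cases hc : Sat X (disj f)
      · rw [if_pos hc]; rintro ⟨i, hi⟩; exact ⟨i, ih i (h i) hi⟩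
      · rw [if_neg hc]; exact fun hs => absurd hs (not_sat_fbot _)
  | impl F G ihF ihG =>
      simp only [freduct, reduct]
      by_cases hc : Sat X (impl F G)
      · rw [if_pos hc]
        intro hs hA
        have hIA : Sat I F := (sat_reduct_false_iff h.1 I S).mp hA
        have : Sat (X ∩ S) (freduct X F) :=
          sat_freduct_of_noImpl h.1 (Set.subset_inter hIX hIS) hIX hIA
        exact ihG h.2 (hs this)
      · rw [if_neg hc]; exact fun hs => absurd hs (not_sat_fbot _)


end Formula

-- ## program-level lemmas

theorem stableOp_le {α : Type} {P : Program α} {I Z : Set α}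
    (hZ : Tstep (progReduct P I) Z ⊆ Z) : stableOp P I ⊆ Z :=
  Set.sInter_subset_of_mem hZ

theorem stableOp_prefixed {α : Type} {P : Program α} (hR : ∀ r ∈ P, inR r.body) (I : Set α) :
    Tstep (progReduct P I) (stableOp P I) ⊆ stableOp P I := by
  intro a ha
  obtain ⟨r', hr', hhd, hsat⟩ := ha
  obtain ⟨r, hrP, rfl⟩ := hr'
  intro Z hZ
  refine hZ ⟨_, ⟨r, hrP, rfl⟩, hhd, ?_⟩
  exact sat_reduct_mono_world (hR r hrP) (stableOp_le hZ) hsat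

theorem stableOp_anti {α : Type} {P : Program α} (hR : ∀ r ∈ P, inR r.body)
    {I₁ I₂ : Set α} (hI : I₁ ⊆ I₂) : stableOp P I₂ ⊆ stableOp P I₁ := by
  intro a ha
  intro Z hZ
  refine ha Z ?_
  intro b hb
  obtain ⟨r', hr', hhd, hsat⟩ := hb
  obtain ⟨r, hrP, rfl⟩ := hr'
  exact hZ ⟨_, ⟨r, hrP, rfl⟩, hhd, sat_reduct_anti (hR r hrP) hI Z hsat⟩

theorem wfOp_mono {α : Type} {P : Program α} (hR : ∀ r ∈ P, inR r.body)
    {p q : Set α × Set α} (h : precLe p q) : precLe (wfOp P p) (wfOp P q) :=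
  ⟨stableOp_anti hR h.2, stableOp_anti hR h.1⟩

theorem stable_isModel {α : Type} {P : Program α} {X : Set α} (hX : StableModel P X) :
    ∀ r ∈ P, Sat X r.body → r.head ∈ X := by
  intro r hr hs
  exact hX.1 ⟨r.head, freduct X r.body⟩ ⟨r, hr, rfl⟩ (sat_freduct_self hs)

/-- C1: a stable model bounds `stableOp` over larger sets. -/
theorem stableOp_subset_stable {α : Type} {P : Program α} (hR : ∀ r ∈ P, inR r.body)
    {X J : Set α} (hX : StableModel P X) (hXJ : X ⊆ J) : stableOp P J ⊆ X := by
  refine stableOp_le ?_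
  intro a ha
  obtain ⟨r', hr', hhd, hsat⟩ := ha
  obtain ⟨r, hrP, rfl⟩ := hr'
  exact hhd ▸ stable_isModel hX r hrP (sat_of_sat_reduct (hR r hrP) hXJ hsat)

/-- C2: a stable model is contained in `stableOp` over suitable smaller sets. -/
theorem stable_subset_stableOp {α : Type} {P : Program α} (hR : ∀ r ∈ P, inR r.body)
    {X I : Set α} (hX : StableModel P X) (hIX : I ⊆ X) (hIS : I ⊆ stableOp P I) :
    X ⊆ stableOp P I := by
  set S := stableOp P I with hS
  have hYmod : IsModel (freductProg P X) (X ∩ S) := by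
    intro r' hr' hs
    obtain ⟨r, hrP, rfl⟩ := hr'
    constructor
    · exact stable_isModel hX r hrP (sat_of_sat_freduct hs)
    · refine stableOp_prefixed hR I ⟨_, ⟨r, hrP, rfl⟩, rfl, ?_⟩
      exact sat_reduct_of_sat_freduct (hR r hrP) hIX hIS hs
  have heq := hX.2 (X ∩ S) hYmod Set.inter_subset_left
  intro a haX
  rw [← heq] at haX
  exact haX.2

-- ## least fixed point via inductive closure

def precSup {α : Type} (s : Set (Set α × Set α)) : Set α × Set α :=
  (⋃₀ (Prod.fst '' s), ⋂₀ (Prod.snd '' s))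

inductive Reach {α : Type} (P : Program α) : Set α × Set α → Prop
  | step : ∀ p, Reach P p → Reach P (wfOp P p)
  | sup : ∀ s : Set (Set α × Set α), (∀ p ∈ s, Reach P p) → Reach P (precSup s)

theorem reach_phi {α : Type} {P : Program α} (hR : ∀ r ∈ P, inR r.body)
    {X : Set α} (hX : StableModel P X) :
    ∀ p, Reach P p → precLe p (wfOp P p) ∧ p.1 ⊆ X ∧ X ⊆ p.2 := by
  intro p h
  induction h with
  | step p hp ih =>
      obtain ⟨hpost, hLB, hUB⟩ := ih
      have hp12 : p.1 ⊆ p.2 := hLB.trans hUB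
      refine ⟨wfOp_mono hR hpost, ?_, ?_⟩
      · exact stableOp_subset_stable hR hX hUB
      · exact stable_subset_stableOp hR hX hLB
          (hpost.1.trans (stableOp_anti hR hp12))
  | sup s hs ih =>
      refine ⟨⟨?_, ?_⟩, ?_, ?_⟩
      · rintro a ⟨t, ⟨q, hq, rfl⟩, hat⟩
        have hmem : q.2 ∈ Prod.snd '' s := ⟨q, hq, rfl⟩
        exact stableOp_anti hR (Set.sInter_subset_of_mem hmem)
          ((ih q hq).1.1 hat)
      · intro a ha t ht
        obtain ⟨q, hq, rfl⟩ := ht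
        refine (ih q hq).1.2 ?_
        refine stableOp_anti hR ?_ ha
        have hmem : q.1 ∈ Prod.fst '' s := ⟨q, hq, rfl⟩
        exact Set.subset_sUnion_of_mem hmem
      · rintro a ⟨t, ⟨q, hq, rfl⟩, hat⟩
        exact (ih q hq).2.1 hat
      · intro a ha t ht
        obtain ⟨q, hq, rfl⟩ := ht
        exact (ih q hq).2.2 ha

theorem precLe_antisymm {α : Type} {p q : Set α × Set α}
    (h1 : precLe p q) (h2 : precLe q p) : p = q :=
  Prod.ext (Set.Subset.antisymm h1.1 h2.1) (Set.Subset.antisymm h2.2 h1.2)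


/-- For an R-program, every stable model lies between the components of the
well-founded model. -/
theorem stmt11 {α : Type} (P : Program α) (hR : ∀ r ∈ P, inR r.body)
    (I J : Set α) (hWF : IsWFModel P (I, J))
    (X : Set α) (hX : StableModel P X) : I ⊆ X ∧ X ⊆ J := by
  set q : Set α × Set α := precSup {p | Reach P p} with hq
  have hreach : Reach P q := Reach.sup _ (fun p hp => hp)
  have hΦ := reach_phi hR hX q hreach
  have hstep : Reach P (wfOp P q) := Reach.step q hreach
  have hle : precLe (wfOp P q) q := by
    constructor
    · exact Set.subset_sUnion_of_mem ⟨wfOp P q, hstep, rfl⟩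
    · exact Set.sInter_subset_of_mem ⟨wfOp P q, hstep, rfl⟩
  have hfix : wfOp P q = q := precLe_antisymm hle hΦ.1
  have hmin := hWF.2 q hfix
  exact ⟨hmin.1.trans hΦ.2.1, hΦ.2.2.trans hmin.2⟩
end

section
/- Let P be an F-program, X a stable model of P, I and J two-valued interpretations with I ⊆ X ⊆ J. Then for every rule r ∈ P not in the simplification P^{I,J} = {r ∈ P : J ⊨ body(r)^{I,+}}, X does not satisfy body(r); consequently X is a stable model of P if and only if X is a stable model of P^{I,J}. -/
open Formula

lemma reduct_key {α : Type} (I X J : Set α) (hIX : I ⊆ X) (hXJ : X ⊆ J) :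
    ∀ F : Formula α,
      (Sat X F → Sat J (reduct I true F)) ∧ (Sat J (reduct I false F) → Sat X F) := by
  intro F
  induction F with
  | atom a =>
    refine ⟨fun h => hXJ h, fun h => ?_⟩
    simp only [reduct] at h
    by_cases hI : a ∈ I
    · exact hIX hI
    · rw [if_neg hI] at h
      obtain ⟨i, _⟩ := h
      exact i.elim
  | conj f ih =>
    exact ⟨fun h i => (ih i).1 (h i), fun h i => (ih i).2 (h i)⟩
  | disj f ih =>
    exact ⟨fun ⟨i, h⟩ => ⟨i, (ih i).1 h⟩, fun ⟨i, h⟩ => ⟨i, (ih i).2 h⟩⟩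
  | impl F G ihF ihG =>
    exact ⟨fun h hF => ihG.1 (h (ihF.2 hF)), fun h hF => ihG.2 (h (ihF.1 hF))⟩

lemma freduct_of_notSat {α : Type} (X : Set α) (F : Formula α) (h : ¬ Sat X F) :
    freduct X F = fbot := by
  cases F with
  | atom a => simp only [freduct]; exact if_neg h
  | conj f => simp only [freduct]; exact if_neg h
  | disj f => simp only [freduct]; exact if_neg h
  | impl F G => simp only [freduct]; exact if_neg h

lemma isModel_freduct_iff {α : Type} (P : Program α) (X I J : Set α)
    (hIX : I ⊆ X) (hXJ : X ⊆ J) (Y : Set α) :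
    IsModel (freductProg P X) Y ↔ IsModel (freductProg (simpProg P I J) X) Y := by
  constructor
  · intro h r hr
    obtain ⟨s, hs, rfl⟩ := hr
    exact h _ ⟨s, hs.1, rfl⟩
  · intro h r hr hsat
    obtain ⟨s, hs, rfl⟩ := hr
    by_cases hb : Sat X s.body
    · exact h _ ⟨s, ⟨hs, (reduct_key I X J hIX hXJ s.body).1 hb⟩, rfl⟩ hsat
    · rw [show (⟨s.head, freduct X s.body⟩ : Rule α).body = freduct X s.body from rfl,
        freduct_of_notSat X s.body hb] at hsat
      obtain ⟨i, _⟩ := hsat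
      exact i.elim

/-- If `I ⊆ X ⊆ J` and `X` is a stable model of `P`, then every rule dropped by the
simplification `P^{I,J}` has its body falsified by `X`; consequently `X` is a stable
model of `P` iff it is one of `P^{I,J}`. -/
theorem stmt12 {α : Type} (P : Program α) (X I J : Set α)
    (hX : StableModel P X) (hIX : I ⊆ X) (hXJ : X ⊆ J) :
    (∀ r ∈ P, r ∉ simpProg P I J → ¬ Sat X r.body) ∧
    (StableModel P X ↔ StableModel (simpProg P I J) X) := by
  refine ⟨fun r hr hns hsat => hns ⟨hr, (reduct_key I X J hIX hXJ r.body).1 hsat⟩, ?_⟩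
  have key := isModel_freduct_iff P X I J hIX hXJ
  constructor
  · rintro ⟨hm, hmin⟩
    exact ⟨(key X).1 hm, fun Y hY hYX => hmin Y ((key Y).2 hY) hYX⟩
  · rintro ⟨hm, hmin⟩
    exact ⟨(key X).2 hm, fun Y hY hYX => hmin Y ((key Y).1 hY) hYX⟩
end

section
/- Let P be an F-program and let I_r be a set of atoms. Define the relative stable operator S_P^{I_r}(J) as the least fixed point of the operator X ↦ T_{P^{J,+}}(I_r ∪ X), where T is the one-step provability operator and P^{J,+} is the ID-reduct. Then S_P^{I_r} is antimonotone in J and monotone in I_r: J' ⊆ J implies S_P^{I_r}(J) ⊆ S_P^{I_r}(J'), and I_r' ⊆ I_r implies S_P^{I_r'}(J) ⊆ S_P^{I_r}(J). -/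
open Formula

lemma reduct_anti {α : Type} {J J' : Set α} (hJ : J' ⊆ J) (X : Set α) :
    ∀ F : Formula α,
      (Sat X (reduct J true F) → Sat X (reduct J' true F)) ∧
      (Sat X (reduct J' false F) → Sat X (reduct J false F)) := by
  intro F
  induction F with
  | atom a =>
    constructor
    · exact id
    · intro h
      simp only [reduct] at h ⊢
      by_cases ha : a ∈ J'
      · simp [hJ ha]
        intro i; exact i.elim
      · simp [ha] at h
        obtain ⟨i, _⟩ := h
        exact i.elim
  | conj f ih =>
    exact ⟨fun h i => (ih i).1 (h i), fun h i => (ih i).2 (h i)⟩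
  | disj f ih =>
    exact ⟨fun ⟨i, h⟩ => ⟨i, (ih i).1 h⟩, fun ⟨i, h⟩ => ⟨i, (ih i).2 h⟩⟩
  | impl F G ihF ihG =>
    exact ⟨fun h hF => ihG.1 (h (ihF.2 hF)), fun h hF => ihG.2 (h (ihF.1 hF))⟩

lemma reduct_monoSat {α : Type} {X Y : Set α} (hXY : X ⊆ Y) (J : Set α) :
    ∀ F : Formula α,
      (Sat X (reduct J true F) → Sat Y (reduct J true F)) ∧
      (Sat Y (reduct J false F) → Sat X (reduct J false F)) := by
  intro F
  induction F with
  | atom a =>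
    constructor
    · exact fun h => hXY h
    · intro h
      simp only [reduct] at h ⊢
      by_cases ha : a ∈ J
      · simp [ha]; intro i; exact i.elim
      · simp [ha] at h
        obtain ⟨i, _⟩ := h
        exact i.elim
  | conj f ih =>
    exact ⟨fun h i => (ih i).1 (h i), fun h i => (ih i).2 (h i)⟩
  | disj f ih =>
    exact ⟨fun ⟨i, h⟩ => ⟨i, (ih i).1 h⟩, fun ⟨i, h⟩ => ⟨i, (ih i).2 h⟩⟩
  | impl F G ihF ihG =>
    exact ⟨fun h hF => ihG.1 (h (ihF.2 hF)), fun h hF => ihG.2 (h (ihF.1 hF))⟩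

/-- The relative stable operator is antimonotone in its argument and monotone in its
parameter. -/
theorem stmt18 {α : Type} (P : Program α) :
    (∀ Ir J J' : Set α, J' ⊆ J → relStable P Ir J ⊆ relStable P Ir J') ∧
    (∀ Ir Ir' J : Set α, Ir' ⊆ Ir → relStable P Ir' J ⊆ relStable P Ir J) := by
  constructor
  · intro Ir J J' hJ x hx X hX
    refine hx X ?_
    intro a ha
    refine hX ?_
    obtain ⟨r, hrP, hhead, hsat⟩ := ha
    obtain ⟨r0, hr0, rfl⟩ := hrP
    exact ⟨⟨r0.head, reduct J' true r0.body⟩, ⟨r0, hr0, rfl⟩, hhead,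
      (reduct_anti hJ (Ir ∪ X) r0.body).1 hsat⟩
  · intro Ir Ir' J hI x hx X hX
    refine hx X ?_
    intro a ha
    refine hX ?_
    obtain ⟨r, hrP, hhead, hsat⟩ := ha
    exact ⟨r, hrP, hhead, by
      obtain ⟨r0, hr0, rfl⟩ := hrP
      exact (reduct_monoSat (Set.union_subset_union_left X hI) J r0.body).1 hsat⟩
end
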